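/- If the almost sure theory T_p admits a complete set of completions {σ_1, σ_2, …} with limiting probabilities p_i = lim P(σ_i) satisfying ∑ p_i = 1, then p is a convergence law, and for every first-order sentence A, lim_{n→∞} P(A) = ∑_{i ∈ S(A)} p_i where S(A) = {i : T_p ∪ {σ_i} ⊨ A}. -/

import Mathlib

open Finset Filter

noncomputable section
open scoped Classical

/-- The type of potential edges of a `(d+1)`-uniform hypergraph on `n` vertices. -/
abbrev Edge (d n : ℕ) := {s : Finset (Fin n) // s.card = d + 1}

/-- Probability of an event in the binomial random `(d+1)`-uniform hypergraph `G^{d+1}(n,p)`. -/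
def hprob (d n : ℕ) (p : ℝ) (P : Finset (Edge d n) → Prop) : ℝ :=
  ∑ H : Finset (Edge d n),
    if P H then p ^ H.card * (1 - p) ^ (Fintype.card (Edge d n) - H.card) else 0

/-- Expectation of a random variable on `G^{d+1}(n,p)`. -/
def hexp (d n : ℕ) (p : ℝ) (X : Finset (Edge d n) → ℝ) : ℝ :=
  ∑ H : Finset (Edge d n),
    p ^ H.card * (1 - p) ^ (Fintype.card (Edge d n) - H.card) * X H

/-- The first-order language of `(d+1)`-uniform hypergraphs: one `(d+1)`-ary relation. -/
def hyperLang (d : ℕ) : FirstOrder.Language :=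
  { Functions := fun _ => Empty, Relations := fun k => PLift (k = d + 1) }

/-- The canonical `hyperLang`-structure on `Fin n` induced by an edge set. -/
def hyperStructure (d n : ℕ) (H : Finset (Edge d n)) : (hyperLang d).Structure (Fin n) where
  funMap := fun f _ => f.elim
  RelMap := fun _ x => ∃ e ∈ H, (e : Finset (Fin n)).val = Multiset.map x Finset.univ.val

/-- Satisfaction of a first-order sentence by a finite hypergraph. -/
def hsat {d n : ℕ} (H : Finset (Edge d n)) (φ : (hyperLang d).Sentence) : Prop :=
  @FirstOrder.Language.Sentence.Realize (hyperLang d) (Fin n) (hyperStructure d n H) φ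

/-- The probability that `G^{d+1}(n,p(n))` satisfies a first-order sentence. -/
def psent (d : ℕ) (p : ℕ → ℝ) (φ : (hyperLang d).Sentence) (n : ℕ) : ℝ :=
  hprob d n (p n) (fun H => hsat H φ)

/-- The almost sure theory `T_p`. -/
def almostSureTheory (d : ℕ) (p : ℕ → ℝ) : (hyperLang d).Theory :=
  {φ | Tendsto (psent d p φ) atTop (nhds 1)}

open FirstOrder FirstOrder.Language

section Measure
variable {d n : ℕ} {p : ℝ} (h0 : 0 ≤ p) (h1 : p ≤ 1)

include h0 h1

lemma weight_nonneg (H : Finset (Edge d n)) :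
    0 ≤ p ^ H.card * (1 - p) ^ (Fintype.card (Edge d n) - H.card) :=
  mul_nonneg (pow_nonneg h0 _) (pow_nonneg (by linarith) _)

lemma hprob_nonneg (P : Finset (Edge d n) → Prop) : 0 ≤ hprob d n p P :=
  Finset.sum_nonneg fun H _ => by
    split_ifs
    · exact mul_nonneg (pow_nonneg h0 _) (pow_nonneg (by linarith) _)
    · exact le_rfl

omit h0 h1 in
lemma hprob_congr {P Q : Finset (Edge d n) → Prop} (h : ∀ H, P H ↔ Q H) :
    hprob d n p P = hprob d n p Q :=
  Finset.sum_congr rfl fun H _ => by rw [if_congr (h H) rfl rfl]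

lemma hprob_mono {P Q : Finset (Edge d n) → Prop} (h : ∀ H, P H → Q H) :
    hprob d n p P ≤ hprob d n p Q :=
  Finset.sum_le_sum fun H _ => by
    by_cases hP : P H
    · simp [hP, h H hP]
    · simp only [hP, if_false]
      split_ifs
      · exact mul_nonneg (pow_nonneg h0 _) (pow_nonneg (by linarith) _)
      · exact le_rfl

omit h0 h1 in
lemma hprob_true : hprob d n p (fun _ => True) = 1 := by
  have key := Finset.prod_add (fun _ : Edge d n => p) (fun _ => 1 - p) Finset.univ
  simp only [Finset.prod_const, Finset.powerset_univ] at key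
  have h2 : ∀ H : Finset (Edge d n),
      p ^ H.card * (1 - p) ^ (Finset.univ \ H).card
        = p ^ H.card * (1 - p) ^ (Fintype.card (Edge d n) - H.card) := by
    intro H
    rw [Finset.card_sdiff_of_subset (Finset.subset_univ H), Finset.card_univ]
  have key2 : hprob d n p (fun _ => True) = (p + (1 - p)) ^ (Finset.univ : Finset (Edge d n)).card := by
    rw [key]
    simp only [hprob, if_true]
    exact Finset.sum_congr rfl fun H _ => (h2 H).symm
  rw [key2]
  norm_num

omit h0 h1 in
lemma hprob_false : hprob d n p (fun _ => False) = 0 := by simp [hprob]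

omit h0 h1 in
lemma hprob_inclexcl (P Q : Finset (Edge d n) → Prop) :
    hprob d n p (fun H => P H ∨ Q H) + hprob d n p (fun H => P H ∧ Q H)
      = hprob d n p P + hprob d n p Q := by
  simp only [hprob, ← Finset.sum_add_distrib]
  refine Finset.sum_congr rfl fun H _ => ?_
  by_cases hP : P H <;> by_cases hQ : Q H <;> simp [hP, hQ]

lemma hprob_union_le (P Q : Finset (Edge d n) → Prop) :
    hprob d n p (fun H => P H ∨ Q H) ≤ hprob d n p P + hprob d n p Q := by
  have h3 := hprob_inclexcl (d := d) (n := n) (p := p) P Q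
  have h2 := hprob_nonneg h0 h1 (fun H => P H ∧ Q H)
  linarith

omit h0 h1 in
lemma hprob_split (P A : Finset (Edge d n) → Prop) :
    hprob d n p P = hprob d n p (fun H => P H ∧ A H) + hprob d n p (fun H => P H ∧ ¬ A H) := by
  have h3 := hprob_inclexcl (d := d) (n := n) (p := p)
    (fun H => P H ∧ A H) (fun H => P H ∧ ¬ A H)
  have hu : hprob d n p (fun H => (P H ∧ A H) ∨ (P H ∧ ¬ A H)) = hprob d n p P :=
    hprob_congr fun H => by tauto
  have hf : hprob d n p (fun H => (P H ∧ A H) ∧ (P H ∧ ¬ A H)) = 0 := by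
    rw [hprob_congr (Q := fun _ => False) (fun H => by tauto), hprob_false]
  linarith

omit h0 h1 in
lemma hprob_compl (P : Finset (Edge d n) → Prop) :
    hprob d n p (fun H => ¬ P H) = 1 - hprob d n p P := by
  have h3 := hprob_split (d := d) (n := n) (p := p) (fun _ => True) P
  rw [hprob_true] at h3
  have h2 : hprob d n p (fun H => True ∧ P H) = hprob d n p P := hprob_congr fun H => by tauto
  have h4 : hprob d n p (fun H => True ∧ ¬ P H) = hprob d n p (fun H => ¬ P H) :=
    hprob_congr fun H => by tauto
  linarith

lemma hprob_le_one (P : Finset (Edge d n) → Prop) : hprob d n p P ≤ 1 := by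
  have h3 := hprob_compl (d := d) (n := n) (p := p) P
  have h2 := hprob_nonneg h0 h1 (fun H => ¬ P H)
  linarith

lemma hprob_biUnion_le {ι : Type*} (I : Finset ι) (E : ι → Finset (Edge d n) → Prop) :
    hprob d n p (fun H => ∃ i ∈ I, E i H) ≤ ∑ i ∈ I, hprob d n p (E i) := by
  induction I using Finset.induction_on with
  | empty => simp [hprob]
  | insert a I' ha ih =>
    have hc : hprob d n p (fun H => ∃ i ∈ insert a I', E i H)
        = hprob d n p (fun H => E a H ∨ ∃ i ∈ I', E i H) := hprob_congr fun H => by simp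
    rw [Finset.sum_insert ha, hc]
    calc hprob d n p (fun H => E a H ∨ ∃ i ∈ I', E i H)
        ≤ hprob d n p (E a) + hprob d n p (fun H => ∃ i ∈ I', E i H) :=
          hprob_union_le h0 h1 _ _
      _ ≤ _ := by linarith

lemma hprob_bonferroni (I : Finset ℕ) (E : ℕ → Finset (Edge d n) → Prop) :
    (∑ i ∈ I, hprob d n p (E i))
      - (∑ i ∈ I, ∑ j ∈ I, if i ≠ j then hprob d n p (fun H => E i H ∧ E j H) else 0)
      ≤ hprob d n p (fun H => ∃ i ∈ I, E i H) := by
  induction I using Finset.induction_on with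
  | empty => simp [hprob]
  | insert a I' ha ih =>
    have key := hprob_inclexcl (d := d) (n := n) (p := p)
      (E a) (fun H => ∃ i ∈ I', E i H)
    have hub := hprob_le_one h0 h1 (d := d) (n := n) (p := p) (fun H => E a H ∨ ∃ i ∈ I', E i H)
    have hsub : hprob d n p (fun H => E a H ∧ ∃ i ∈ I', E i H)
        ≤ ∑ j ∈ I', hprob d n p (fun H => E a H ∧ E j H) := by
      have hc2 : hprob d n p (fun H => E a H ∧ ∃ i ∈ I', E i H)
          = hprob d n p (fun H => ∃ i ∈ I', E a H ∧ E i H) := hprob_congr fun H => by tauto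
      rw [hc2]
      exact hprob_biUnion_le h0 h1 _ _
    have hDnew : (∑ j ∈ I', hprob d n p (fun H => E a H ∧ E j H)) +
        (∑ i ∈ I', ∑ j ∈ I', if i ≠ j then hprob d n p (fun H => E i H ∧ E j H) else 0)
        ≤ ∑ i ∈ insert a I', ∑ j ∈ insert a I',
            if i ≠ j then hprob d n p (fun H => E i H ∧ E j H) else 0 := by
      rw [Finset.sum_insert ha]
      have hrow : ∀ i ∈ I', (∑ j ∈ I', if i ≠ j then hprob d n p (fun H => E i H ∧ E j H) else 0)
          ≤ ∑ j ∈ insert a I', if i ≠ j then hprob d n p (fun H => E i H ∧ E j H) else 0 := by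
        intro i _
        rw [Finset.sum_insert ha]
        have hnn : (0:ℝ) ≤ if i ≠ a then hprob d n p (fun H => E i H ∧ E a H) else 0 := by
          split_ifs
          · exact hprob_nonneg h0 h1 _
          · exact le_rfl
        linarith
      have h1' : (∑ j ∈ I', hprob d n p (fun H => E a H ∧ E j H))
          ≤ ∑ j ∈ insert a I', if a ≠ j then hprob d n p (fun H => E a H ∧ E j H) else 0 := by
        rw [Finset.sum_insert ha]
        simp only [ne_eq, not_true_eq_false, if_false]
        have heq : (∑ j ∈ I', hprob d n p (fun H => E a H ∧ E j H))
            = ∑ j ∈ I', if a ≠ j then hprob d n p (fun H => E a H ∧ E j H) else 0 :=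
          Finset.sum_congr rfl fun j hj => by
            rw [if_pos]; rintro rfl; exact ha hj
        simp only [ne_eq] at heq ⊢
        linarith
      have h2' := Finset.sum_le_sum hrow
      linarith
    have hcongr : hprob d n p (fun H => ∃ i ∈ insert a I', E i H)
        = hprob d n p (fun H => E a H ∨ ∃ i ∈ I', E i H) := hprob_congr fun H => by simp
    rw [Finset.sum_insert ha, hcongr]
    linarith

end Measure

section Logic
variable {d : ℕ} {p : ℕ → ℝ}

lemma hsat_not {n : ℕ} (H : Finset (Edge d n)) (φ : (hyperLang d).Sentence) :
    hsat H φ.not ↔ ¬ hsat H φ := by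
  letI := hyperStructure d n H
  exact Sentence.realize_not (Fin n)

/-- Key compactness lemma: if `T_p ∪ {φ, ψ}` is unsatisfiable then `P(φ ∧ ψ) → 0`. -/
lemma tendsto_pair_zero (hp : ∀ n, 0 ≤ p n ∧ p n ≤ 1) (φ ψ : (hyperLang d).Sentence)
    (huns : ¬ (insert φ (insert ψ (almostSureTheory d p))).IsSatisfiable) :
    Tendsto (fun n => hprob d n (p n) (fun H => hsat H φ ∧ hsat H ψ)) atTop (nhds 0) := by
  have hfin : ¬ (insert φ (insert ψ (almostSureTheory d p))).IsFinitelySatisfiable := fun h =>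
    huns (Theory.isSatisfiable_iff_isFinitelySatisfiable.2 h)
  simp only [Theory.IsFinitelySatisfiable, not_forall] at hfin
  obtain ⟨T₀, hsub, hT₀⟩ := hfin
  set Ψ : Finset (hyperLang d).Sentence := T₀.filter (fun χ => χ ∈ almostSureTheory d p) with hΨ
  have hpt : ∀ n, 1 ≤ n → ∀ H : Finset (Edge d n),
      (hsat H φ ∧ hsat H ψ) → ∃ χ ∈ Ψ, ¬ hsat H χ := by
    intro n hn H hA
    by_contra hcon
    push_neg at hcon
    apply hT₀
    letI : (hyperLang d).Structure (Fin n) := hyperStructure d n H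
    haveI : Nonempty (Fin n) := ⟨⟨0, hn⟩⟩
    haveI : (Fin n) ⊨ (↑T₀ : (hyperLang d).Theory) := by
      refine (Theory.model_iff _).2 ?_
      intro χ hχ
      have hχ' : χ ∈ T₀ := Finset.mem_coe.1 hχ
      rcases Set.mem_insert_iff.1 (hsub hχ) with rfl | h2
      · exact hA.1
      · rcases Set.mem_insert_iff.1 h2 with rfl | h4
        · exact hA.2
        · exact hcon χ (Finset.mem_filter.2 ⟨hχ', h4⟩)
    exact Theory.Model.isSatisfiable (Fin n)
  have hbound : ∀ n, 1 ≤ n → hprob d n (p n) (fun H => hsat H φ ∧ hsat H ψ)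
      ≤ ∑ χ ∈ Ψ, (1 - psent d p χ n) := by
    intro n hn
    calc hprob d n (p n) (fun H => hsat H φ ∧ hsat H ψ)
        ≤ hprob d n (p n) (fun H => ∃ χ ∈ Ψ, ¬ hsat H χ) :=
          hprob_mono (hp n).1 (hp n).2 (hpt n hn)
      _ ≤ ∑ χ ∈ Ψ, hprob d n (p n) (fun H => ¬ hsat H χ) :=
          hprob_biUnion_le (hp n).1 (hp n).2 _ _
      _ = ∑ χ ∈ Ψ, (1 - psent d p χ n) :=
          Finset.sum_congr rfl fun χ _ => by rw [hprob_compl]; rfl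
  have hB : Tendsto (fun n => ∑ χ ∈ Ψ, (1 - psent d p χ n)) atTop (nhds 0) := by
    have : Tendsto (fun n => ∑ χ ∈ Ψ, (1 - psent d p χ n)) atTop (nhds (∑ χ ∈ Ψ, (0:ℝ))) := by
      refine tendsto_finset_sum _ fun χ hχ => ?_
      have hmem : χ ∈ almostSureTheory d p := (Finset.mem_filter.1 hχ).2
      have : Tendsto (psent d p χ) atTop (nhds 1) := hmem
      simpa using (tendsto_const_nhds (x := (1:ℝ)) (f := atTop)).sub this
    simpa using this
  refine tendsto_of_tendsto_of_tendsto_of_le_of_le' tendsto_const_nhds hB ?_ ?_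
  · exact Eventually.of_forall fun n => hprob_nonneg (hp n).1 (hp n).2 _
  · filter_upwards [eventually_ge_atTop 1] with n hn using hbound n hn

end Logic

/-- If the almost sure theory `T_p` admits a complete set of completions `σ_i` with limiting
probabilities `q_i` summing to `1`, then `p` is a convergence law and for every sentence `A`
the probability converges to the sum of the `q_i` over those `i` with `T_p ∪ {σ_i} ⊨ A`. -/
theorem stmt_19 (d : ℕ) (p : ℕ → ℝ) (hp : ∀ n, 0 ≤ p n ∧ p n ≤ 1)
    (σ : ℕ → (hyperLang d).Sentence) (q : ℕ → ℝ)
    (hcomp : ∀ i, (insert (σ i) (almostSureTheory d p)).IsComplete)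
    (hexcl : ∀ i j, i ≠ j → (almostSureTheory d p) ⊨ᵇ (σ i ⊓ σ j).not)
    (hlim : ∀ i, Tendsto (psent d p (σ i)) atTop (nhds (q i)))
    (hsum : ∑' i, q i = 1) :
    ∀ A : (hyperLang d).Sentence,
      Tendsto (psent d p A) atTop
        (nhds (∑' i, if insert (σ i) (almostSureTheory d p) ⊨ᵇ A then q i else 0)) := by
  intro A
  -- abbreviations
  set T := almostSureTheory d p with hT
  let S : ℕ → Prop := fun i => insert (σ i) T ⊨ᵇ A
  let r : ℕ → ℝ := fun i => if S i then q i else 0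
  show Tendsto (psent d p A) atTop (nhds (∑' i, r i))
  -- unsatisfiability facts
  have hu_uns : ∀ i, S i → ¬ (insert (σ i) (insert A.not T)).IsSatisfiable := by
    intro i hSi hs
    obtain ⟨M⟩ := hs
    have hmod : M ⊨ insert (σ i) T :=
      M.is_model.mono (Set.insert_subset_insert (Set.subset_insert _ _))
    haveI := hmod
    have h2 : M ⊨ A := Theory.models_sentence_iff.1 hSi (Theory.ModelType.of _ M)
    have h3 : M ⊨ A.not :=
      Theory.realize_sentence_of_mem (T := insert (σ i) (insert A.not T))
        (Set.mem_insert_iff.2 (Or.inr (Set.mem_insert _ _)))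
    exact (Sentence.realize_not _).1 h3 h2
  have hc_uns : ∀ i, ¬ S i → ¬ (insert A (insert (σ i) T)).IsSatisfiable := by
    intro i hSi hs
    obtain ⟨M⟩ := hs
    have hnot : insert (σ i) T ⊨ᵇ A.not := ((hcomp i).2 A).resolve_left hSi
    have hmod : M ⊨ insert (σ i) T := M.is_model.mono (Set.subset_insert _ _)
    haveI := hmod
    have h2 : M ⊨ A.not := Theory.models_sentence_iff.1 hnot (Theory.ModelType.of _ M)
    have h3 : M ⊨ A :=
      Theory.realize_sentence_of_mem (T := insert A (insert (σ i) T)) (Set.mem_insert _ _)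
    exact (Sentence.realize_not _).1 h2 h3
  have hv_uns : ∀ i j, i ≠ j → ¬ (insert (σ i) (insert (σ j) T)).IsSatisfiable := by
    intro i j hij hs
    obtain ⟨M⟩ := hs
    have hmod : M ⊨ T :=
      M.is_model.mono ((Set.subset_insert _ _).trans (Set.subset_insert _ _))
    haveI := hmod
    have h2 : M ⊨ (σ i ⊓ σ j).not := Theory.models_sentence_iff.1 (hexcl i j hij)
      (Theory.ModelType.of _ M)
    have h3 : M ⊨ σ i :=
      Theory.realize_sentence_of_mem (T := insert (σ i) (insert (σ j) T)) (Set.mem_insert _ _)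
    have h4 : M ⊨ σ j :=
      Theory.realize_sentence_of_mem (T := insert (σ i) (insert (σ j) T))
        (Set.mem_insert_iff.2 (Or.inr (Set.mem_insert _ _)))
    exact (Sentence.realize_not _).1 h2 (Formula.realize_inf.2 ⟨h3, h4⟩)
  -- tendsto-to-zero facts
  have hu : ∀ i, S i →
      Tendsto (fun n => hprob d n (p n) (fun H => hsat H (σ i) ∧ ¬ hsat H A)) atTop (nhds 0) := by
    intro i hSi
    have h := tendsto_pair_zero hp (σ i) A.not (hu_uns i hSi)
    have he : (fun n => hprob d n (p n) (fun H => hsat H (σ i) ∧ hsat H A.not))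
        = fun n => hprob d n (p n) (fun H => hsat H (σ i) ∧ ¬ hsat H A) :=
      funext fun n => hprob_congr fun H => by rw [hsat_not]
    rwa [he] at h
  have hc : ∀ i, ¬ S i →
      Tendsto (fun n => hprob d n (p n) (fun H => hsat H A ∧ hsat H (σ i))) atTop (nhds 0) :=
    fun i hSi => tendsto_pair_zero hp A (σ i) (hc_uns i hSi)
  have hv : ∀ i j, i ≠ j →
      Tendsto (fun n => hprob d n (p n) (fun H => hsat H (σ i) ∧ hsat H (σ j))) atTop (nhds 0) :=
    fun i j hij => tendsto_pair_zero hp (σ i) (σ j) (hv_uns i j hij)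
  -- summability
  have hq0 : ∀ i, 0 ≤ q i := fun i =>
    ge_of_tendsto (hlim i) (Eventually.of_forall fun n => hprob_nonneg (hp n).1 (hp n).2 _)
  have hqsum : Summable q := by
    by_contra h
    rw [tsum_eq_zero_of_not_summable h] at hsum
    norm_num at hsum
  have hr0 : ∀ i, 0 ≤ r i := by
    intro i; by_cases h : S i <;> simp [r, h, hq0 i]
  have hrle : ∀ i, r i ≤ q i := by
    intro i; by_cases h : S i <;> simp [r, h, hq0 i]
  have hrsum : Summable r := Summable.of_nonneg_of_le hr0 hrle hqsum
  -- epsilon argument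
  rw [Metric.tendsto_atTop]
  intro ε hε
  have hps : Tendsto (fun N => ∑ i ∈ Finset.range N, q i) atTop (nhds 1) := by
    have h := hqsum.hasSum
    rw [hsum] at h
    exact h.tendsto_sum_nat
  obtain ⟨N, hN⟩ := (Metric.tendsto_atTop.1 hps) (ε/8) (by linarith)
  have hNq : 1 - ∑ i ∈ Finset.range N, q i < ε/8 := by
    have h := hN N le_rfl
    rw [Real.dist_eq, abs_sub_lt_iff] at h
    linarith [h.2]
  set I : Finset ℕ := Finset.range N with hI
  set K : Finset ℕ := I.filter S with hK
  have hKr : ∑ i ∈ K, q i = ∑ i ∈ I, r i := by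
    rw [hK, Finset.sum_filter]
  -- tail bounds
  have htail1 : ∑ i ∈ I, r i + ∑' i, r (i + N) = ∑' i, r i := hrsum.sum_add_tsum_nat_add N
  have htail2 : ∑ i ∈ I, q i + ∑' i, q (i + N) = 1 := by
    rw [hI, hqsum.sum_add_tsum_nat_add N, hsum]
  have htail3 : ∑' i, r (i + N) ≤ ∑' i, q (i + N) :=
    Summable.tsum_le_tsum (fun i => hrle _) ((summable_nat_add_iff N).2 hrsum)
      ((summable_nat_add_iff N).2 hqsum)
  have htail4 : (0:ℝ) ≤ ∑' i, r (i + N) := tsum_nonneg fun i => hr0 _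
  have hKL1 : ∑ i ∈ K, q i ≤ ∑' i, r i := by rw [hKr]; linarith
  have hKL2 : (∑' i, r i) - ∑ i ∈ K, q i ≤ ε/8 := by
    rw [hKr]
    have hIq : ∑ i ∈ I, r i ≤ ∑ i ∈ I, q i := Finset.sum_le_sum fun i _ => hrle i
    linarith
  -- sequences
  set Dsum : Finset ℕ → ℕ → ℝ := fun J n => ∑ i ∈ J, ∑ j ∈ J,
    if i ≠ j then hprob d n (p n) (fun H => hsat H (σ i) ∧ hsat H (σ j)) else 0 with hDsum
  set lowseq : ℕ → ℝ := fun n => ∑ i ∈ K, (psent d p (σ i) n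
      - hprob d n (p n) (fun H => hsat H (σ i) ∧ ¬ hsat H A)) - Dsum K n with hlowseq
  set upseq : ℕ → ℝ := fun n => ∑ i ∈ K, psent d p (σ i) n
      + ∑ i ∈ I.filter (fun i => ¬ S i), hprob d n (p n) (fun H => hsat H A ∧ hsat H (σ i))
      + (1 - ∑ i ∈ I, psent d p (σ i) n + Dsum I n) with hupseq
  -- pointwise bounds
  have hDnn : ∀ (J : Finset ℕ) n, 0 ≤ Dsum J n := by
    intro J n
    refine Finset.sum_nonneg fun i _ => Finset.sum_nonneg fun j _ => ?_
    split_ifs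
    · exact hprob_nonneg (hp n).1 (hp n).2 _
    · exact le_rfl
  have hlow : ∀ n, lowseq n ≤ psent d p A n := by
    intro n
    have h0 := (hp n).1
    have h1 := (hp n).2
    have hb := hprob_bonferroni (d := d) (n := n) (p := p n) h0 h1 K (fun i H => hsat H (σ i) ∧ hsat H A)
    have hmono1 : hprob d n (p n) (fun H => ∃ i ∈ K, hsat H (σ i) ∧ hsat H A)
        ≤ psent d p A n := hprob_mono h0 h1 (fun H => by rintro ⟨i, _, _, h⟩; exact h)
    have hEi : ∑ i ∈ K, hprob d n (p n) (fun H => hsat H (σ i) ∧ hsat H A)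
        = ∑ i ∈ K, (psent d p (σ i) n
            - hprob d n (p n) (fun H => hsat H (σ i) ∧ ¬ hsat H A)) := by
      refine Finset.sum_congr rfl fun i _ => ?_
      have := hprob_split (d := d) (n := n) (p := p n)
        (fun H => hsat H (σ i)) (fun H => hsat H A)
      have hps' : psent d p (σ i) n = hprob d n (p n) (fun H => hsat H (σ i)) := rfl
      rw [hps']
      linarith
    have hDle : (∑ i ∈ K, ∑ j ∈ K, if i ≠ j then
          hprob d n (p n) (fun H => (hsat H (σ i) ∧ hsat H A) ∧ hsat H (σ j) ∧ hsat H A) else 0)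
        ≤ Dsum K n := by
      refine Finset.sum_le_sum fun i _ => Finset.sum_le_sum fun j _ => ?_
      split_ifs
      · exact hprob_mono h0 h1 fun H h => ⟨h.1.1, h.2.1⟩
      · exact le_rfl
    simp only [hlowseq]
    rw [← hEi]
    linarith
  have hup : ∀ n, psent d p A n ≤ upseq n := by
    intro n
    have h0 := (hp n).1
    have h1 := (hp n).2
    have hsplitA := hprob_split (d := d) (n := n) (p := p n)
      (fun H => hsat H A) (fun H => ∃ i ∈ I, hsat H (σ i))
    have hAU : hprob d n (p n) (fun H => hsat H A ∧ ∃ i ∈ I, hsat H (σ i))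
        ≤ ∑ i ∈ I, hprob d n (p n) (fun H => hsat H A ∧ hsat H (σ i)) := by
      have hcg : hprob d n (p n) (fun H => hsat H A ∧ ∃ i ∈ I, hsat H (σ i))
          = hprob d n (p n) (fun H => ∃ i ∈ I, hsat H A ∧ hsat H (σ i)) :=
        hprob_congr fun H => by tauto
      rw [hcg]
      exact hprob_biUnion_le h0 h1 _ _
    have hIsplit : ∑ i ∈ I, hprob d n (p n) (fun H => hsat H A ∧ hsat H (σ i))
        = ∑ i ∈ K, hprob d n (p n) (fun H => hsat H A ∧ hsat H (σ i))
          + ∑ i ∈ I.filter (fun i => ¬ S i),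
              hprob d n (p n) (fun H => hsat H A ∧ hsat H (σ i)) := by
      rw [hK]
      exact (Finset.sum_filter_add_sum_filter_not I S _).symm
    have hKA : ∑ i ∈ K, hprob d n (p n) (fun H => hsat H A ∧ hsat H (σ i))
        ≤ ∑ i ∈ K, psent d p (σ i) n :=
      Finset.sum_le_sum fun i _ => hprob_mono h0 h1 fun H h => h.2
    have hAnU : hprob d n (p n) (fun H => hsat H A ∧ ¬ ∃ i ∈ I, hsat H (σ i))
        ≤ 1 - ∑ i ∈ I, psent d p (σ i) n + Dsum I n := by
      have hm : hprob d n (p n) (fun H => hsat H A ∧ ¬ ∃ i ∈ I, hsat H (σ i))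
          ≤ hprob d n (p n) (fun H => ¬ ∃ i ∈ I, hsat H (σ i)) :=
        hprob_mono h0 h1 fun H h => h.2
      have hcompl := hprob_compl (d := d) (n := n) (p := p n)
        (fun H => ∃ i ∈ I, hsat H (σ i))
      have hb := hprob_bonferroni (d := d) (n := n) (p := p n) h0 h1 I (fun i H => hsat H (σ i))
      have hD : (∑ i ∈ I, ∑ j ∈ I, if i ≠ j then
            hprob d n (p n) (fun H => hsat H (σ i) ∧ hsat H (σ j)) else 0) = Dsum I n := rfl
      have hps' : ∑ i ∈ I, hprob d n (p n) (fun H => hsat H (σ i))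
          = ∑ i ∈ I, psent d p (σ i) n := rfl
      rw [hD, hps'] at hb
      linarith
    have hpsA : psent d p A n = hprob d n (p n) (fun H => hsat H A) := rfl
    simp only [hupseq]
    rw [hpsA, hsplitA]
    linarith
  -- limits of the bounding sequences
  have hDlim : ∀ J : Finset ℕ, Tendsto (Dsum J) atTop (nhds 0) := by
    intro J
    have h : Tendsto (Dsum J) atTop (nhds (∑ i ∈ J, ∑ j ∈ J, (0:ℝ))) := by
      refine tendsto_finset_sum _ fun i _ => ?_
      have h2 : Tendsto (fun n => ∑ j ∈ J, if i ≠ j then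
          hprob d n (p n) (fun H => hsat H (σ i) ∧ hsat H (σ j)) else 0) atTop
          (nhds (∑ j ∈ J, (0:ℝ))) := by
        refine tendsto_finset_sum _ fun j _ => ?_
        by_cases hij : i ≠ j
        · have he : (fun n => if i ≠ j then
              hprob d n (p n) (fun H => hsat H (σ i) ∧ hsat H (σ j)) else 0)
              = fun n => hprob d n (p n) (fun H => hsat H (σ i) ∧ hsat H (σ j)) :=
            funext fun n => if_pos hij
          rw [he]
          exact hv i j hij
        · have he : (fun n => if i ≠ j then
              hprob d n (p n) (fun H => hsat H (σ i) ∧ hsat H (σ j)) else 0)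
              = fun n => (0:ℝ) := funext fun n => if_neg hij
          rw [he]
          exact tendsto_const_nhds
      exact h2
    simpa using h
  have hlowlim : Tendsto lowseq atTop (nhds (∑ i ∈ K, q i)) := by
    have h1 : Tendsto (fun n => ∑ i ∈ K, (psent d p (σ i) n
        - hprob d n (p n) (fun H => hsat H (σ i) ∧ ¬ hsat H A))) atTop
        (nhds (∑ i ∈ K, q i)) := by
      have : Tendsto (fun n => ∑ i ∈ K, (psent d p (σ i) n
          - hprob d n (p n) (fun H => hsat H (σ i) ∧ ¬ hsat H A))) atTop
          (nhds (∑ i ∈ K, (q i - 0))) := by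
        refine tendsto_finset_sum _ fun i hi => ?_
        have hSi : S i := (Finset.mem_filter.1 hi).2
        exact (hlim i).sub (hu i hSi)
      simpa using this
    have h2 := h1.sub (hDlim K)
    rw [sub_zero] at h2
    exact h2
  have huplim : Tendsto upseq atTop
      (nhds ((∑ i ∈ K, q i) + 0 + (1 - (∑ i ∈ I, q i) + 0))) := by
    have h1 : Tendsto (fun n => ∑ i ∈ K, psent d p (σ i) n) atTop (nhds (∑ i ∈ K, q i)) :=
      tendsto_finset_sum _ fun i _ => hlim i
    have h2 : Tendsto (fun n => ∑ i ∈ I.filter (fun i => ¬ S i),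
        hprob d n (p n) (fun H => hsat H A ∧ hsat H (σ i))) atTop (nhds 0) := by
      have : Tendsto (fun n => ∑ i ∈ I.filter (fun i => ¬ S i),
          hprob d n (p n) (fun H => hsat H A ∧ hsat H (σ i))) atTop
          (nhds (∑ i ∈ I.filter (fun i => ¬ S i), (0:ℝ))) := by
        refine tendsto_finset_sum _ fun i hi => ?_
        exact hc i (Finset.mem_filter.1 hi).2
      simpa using this
    have h3 : Tendsto (fun n => 1 - ∑ i ∈ I, psent d p (σ i) n + Dsum I n) atTop
        (nhds (1 - (∑ i ∈ I, q i) + 0)) := by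
      have h4 : Tendsto (fun n => ∑ i ∈ I, psent d p (σ i) n) atTop (nhds (∑ i ∈ I, q i)) :=
        tendsto_finset_sum _ fun i _ => hlim i
      exact (tendsto_const_nhds.sub h4).add (hDlim I)
    exact (h1.add h2).add h3
  -- conclude
  obtain ⟨N1, hN1⟩ := (Metric.tendsto_atTop.1 hlowlim) (ε/8) (by linarith)
  obtain ⟨N2, hN2⟩ := (Metric.tendsto_atTop.1 huplim) (ε/8) (by linarith)
  refine ⟨max N1 N2, fun n hn => ?_⟩
  have hn1 := hN1 n (le_trans (le_max_left _ _) hn)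
  have hn2 := hN2 n (le_trans (le_max_right _ _) hn)
  rw [Real.dist_eq, abs_sub_lt_iff] at hn1 hn2 ⊢
  have hl := hlow n
  have hup' := hup n
  have hIK : ∑ i ∈ K, q i ≤ ∑ i ∈ I, q i := by
    refine Finset.sum_le_sum_of_subset_of_nonneg (Finset.filter_subset _ _) ?_
    intro i _ _
    exact hq0 i
  have hKL1' : ∑ i ∈ K, q i ≤ ∑' i, r i := hKL1
  have hKL2' : (∑' i, r i) - ∑ i ∈ K, q i ≤ ε / 8 := hKL2
  have hNq' : 1 - ∑ i ∈ I, q i < ε / 8 := hNq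
  clear_value r S I K Dsum lowseq upseq
  constructor
  · linarith [hn2.1, hn2.2, hn1.1, hn1.2, hKL1', hKL2', hNq']
  · linarith [hn2.1, hn2.2, hn1.1, hn1.2, hKL1', hKL2', hNq']

end
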